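/- Assume Γ_{x₀} has full rank and the vanishing-derivative problem is feasible. Then the vanishing derivative pre-certificate is unique and given in closed form by η_V = Φ* Γ_{x₀}(Γ_{x₀}* Γ_{x₀})^{−1} (sign(a₀), 0)ᵀ. -/

import Mathlib

open MeasureTheory

attribute [local instance] ZeroLEOneClass.factZeroLtOne

noncomputable section

/-- The torus `T = ℝ/ℤ`. -/
abbrev 𝕋 := AddCircle (1 : ℝ)

/-- Integral `∫ f dm` of a function against a (finite) signed Radon measure on the torus. -/
def sInt (m : SignedMeasure 𝕋) (f : 𝕋 → ℝ) : ℝ :=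
  ∫ x, f x ∂m.toJordanDecomposition.posPart - ∫ x, f x ∂m.toJordanDecomposition.negPart

/-- The total variation norm `‖m‖_TV = sup { ∫ ψ dm : ψ ∈ C(𝕋), ‖ψ‖_∞ ≤ 1 }`. -/
def tv (m : SignedMeasure 𝕋) : ℝ :=
  sSup { r | ∃ ψ : C(𝕋, ℝ), ‖ψ‖ ≤ 1 ∧ r = sInt m ψ }

/-- The lift of a function on the torus to a `1`-periodic function on `ℝ`. -/
def lift (f : 𝕋 → ℝ) : ℝ → ℝ := fun s => f (s : 𝕋)

/-- The convolution operator `Φ : M(𝕋) → L²(𝕋)`, `(Φm)(t) = ∫ φ(x − t) dm(x)`. -/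
def Phi (φ : 𝕋 → ℝ) (m : SignedMeasure 𝕋) : 𝕋 → ℝ := fun t => sInt m (fun x => φ (x - t))

/-- The adjoint operator `Φ* : L²(𝕋) → C(𝕋)`, `(Φ*p)(t) = ∫ φ(t − x) p(x) dx`. -/
def PhiStar (φ : 𝕋 → ℝ) (p : 𝕋 → ℝ) : 𝕋 → ℝ := fun t => ∫ x, φ (t - x) * p x

/-- The `L²(𝕋)` norm of a function. -/
def L2norm (p : 𝕋 → ℝ) : ℝ := Real.sqrt (∫ t, (p t) ^ 2)

/-- The `L²(𝕋)` inner product. -/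
def dotL2 (y p : 𝕋 → ℝ) : ℝ := ∫ t, y t * p t

/-- `p` is admissible for the dual problems: `p ∈ L²` and `‖Φ*p‖_∞ ≤ 1`. -/
def DualAdm (φ : 𝕋 → ℝ) (p : 𝕋 → ℝ) : Prop :=
  MemLp p 2 volume ∧ ∀ t : 𝕋, |PhiStar φ p t| ≤ 1


variable {N : ℕ}

/-- The `2N` kernel functions `φ(x₀ᵢ − ·)` and `φ'(x₀ᵢ − ·)` defining
`Γ_{x₀} : ℝ^{2N} → L²(𝕋)` (here `φd` denotes `φ'`). -/
def gker (φ φd : 𝕋 → ℝ) (x₀ : Fin N → ℝ) : Fin N ⊕ Fin N → 𝕋 → ℝ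
  | Sum.inl i => fun t => φ (((x₀ i : ℝ) : 𝕋) - t)
  | Sum.inr i => fun t => φd (((x₀ i : ℝ) : 𝕋) - t)

/-- The Gram matrix `Γ_{x₀}* Γ_{x₀} ∈ ℝ^{2N×2N}`. -/
def gram (φ φd : 𝕋 → ℝ) (x₀ : Fin N → ℝ) :
    Matrix (Fin N ⊕ Fin N) (Fin N ⊕ Fin N) ℝ :=
  fun j k => ∫ t, gker φ φd x₀ j t * gker φ φd x₀ k t

/-- The interpolation constraints of the vanishing derivative pre-certificate:
`(Φ*p)(x₀ᵢ) = sign(a₀ᵢ)` and `(Φ*p)'(x₀ᵢ) = 0` for all `i`. -/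
def VConstr (φ : 𝕋 → ℝ) (a₀ : Fin N → ℝ) (x₀ : Fin N → ℝ) (p : 𝕋 → ℝ) : Prop :=
  ∀ i, PhiStar φ p ((x₀ i : ℝ) : 𝕋) = Real.sign (a₀ i) ∧
    deriv (lift (PhiStar φ p)) (x₀ i) = 0


section Aux
variable {N : ℕ}

lemma continuous_of_lift {f : 𝕋 → ℝ} (h : Continuous (lift f)) : Continuous f :=
  (QuotientAddGroup.isQuotientMap_mk _).continuous_iff.mpr h

lemma exists_bound_of_cont {f : 𝕋 → ℝ} (hf : Continuous f) : ∃ C, ∀ t, ‖f t‖ ≤ C := by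
  obtain ⟨C, hC⟩ := isCompact_univ.exists_bound_of_continuousOn hf.continuousOn
  exact ⟨C, fun t => hC t trivial⟩

lemma memL2_of_cont {f : 𝕋 → ℝ} (hf : Continuous f) : MemLp f 2 volume := by
  obtain ⟨C, hC⟩ := exists_bound_of_cont hf
  exact (memLp_top_of_bound hf.aestronglyMeasurable C (Filter.Eventually.of_forall hC)).mono_exponent le_top

lemma integrable_of_memL2 {f : 𝕋 → ℝ} (hf : MemLp f 2 volume) : Integrable f volume :=
  hf.integrable one_le_two

lemma integrable_of_cont {f : 𝕋 → ℝ} (hf : Continuous f) : Integrable f volume :=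
  integrable_of_memL2 (memL2_of_cont hf)

lemma continuous_phid {φ φd : 𝕋 → ℝ} (hφ : ContDiff ℝ 2 (lift φ))
    (hφd : ∀ s : ℝ, φd ((s : ℝ) : 𝕋) = deriv (lift φ) s) : Continuous φd :=
  continuous_of_lift (by
    show Continuous (fun s : ℝ => φd ((s : ℝ) : 𝕋))
    simp only [hφd]
    exact hφ.continuous_deriv one_le_two)

lemma continuous_gker {φ φd : 𝕋 → ℝ} (hφ : Continuous φ) (hφd : Continuous φd)
    (x₀ : Fin N → ℝ) (j : Fin N ⊕ Fin N) : Continuous (gker φ φd x₀ j) := by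
  cases j with
  | inl i => exact hφ.comp (continuous_sub_left _)
  | inr i => exact hφd.comp (continuous_sub_left _)

/-- differentiation under the integral sign -/
lemma hasDerivAt_phiStar {φ φd : 𝕋 → ℝ} (hφ : ContDiff ℝ 2 (lift φ))
    (hφd : ∀ s : ℝ, φd ((s : ℝ) : 𝕋) = deriv (lift φ) s)
    {q : 𝕋 → ℝ} (hq : MemLp q 2 volume) (s : ℝ) :
    HasDerivAt (lift (PhiStar φ q)) (∫ x, φd (((s : ℝ) : 𝕋) - x) * q x) s := by
  have hφc : Continuous φ := continuous_of_lift hφ.continuous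
  have hφdc : Continuous φd := continuous_phid hφ hφd
  obtain ⟨C, hC⟩ := exists_bound_of_cont hφdc
  have hqint : Integrable q volume := integrable_of_memL2 hq
  have key := hasDerivAt_integral_of_dominated_loc_of_deriv_le (μ := volume)
    (F := fun (n : ℝ) (x : 𝕋) => φ ((n : 𝕋) - x) * q x)
    (F' := fun (n : ℝ) (x : 𝕋) => φd ((n : 𝕋) - x) * q x)
    (x₀ := s) (bound := fun x => C * ‖q x‖) (s := Metric.ball s 1) (Metric.ball_mem_nhds s one_pos)
    (Filter.Eventually.of_forall fun n =>
      ((hφc.comp (continuous_const.sub continuous_id)).aestronglyMeasurable).mul hq.1)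
    (hqint.bdd_mul ((hφc.comp (continuous_const.sub continuous_id)).aestronglyMeasurable)
      (Filter.Eventually.of_forall (exists_bound_of_cont (hφc.comp (continuous_const.sub continuous_id))).choose_spec))
    (((hφdc.comp (continuous_const.sub continuous_id)).aestronglyMeasurable).mul hq.1)
    (Filter.Eventually.of_forall fun x n _ => by
      rw [norm_mul]
      exact mul_le_mul_of_nonneg_right (hC _) (norm_nonneg _))
    (hqint.norm.const_mul C)
    (Filter.Eventually.of_forall fun x n _ => by
      induction x using QuotientAddGroup.induction_on with
      | H y =>
        have h1 : ∀ m : ℝ, ((m : 𝕋) - (y : 𝕋)) = ((m - y : ℝ) : 𝕋) := fun m => by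
          rw [AddCircle.coe_sub]
        have hd : HasDerivAt (fun m : ℝ => lift φ (m - y))
            (deriv (lift φ) (n - y)) n := by
          have := ((hφ.differentiable two_ne_zero).differentiableAt.hasDerivAt
            (x := n - y)).comp n ((hasDerivAt_id n).sub_const y)
          rw [mul_one] at this; exact this
        have : HasDerivAt (fun m : ℝ => φ ((m : 𝕋) - (y : 𝕋)) * q (y : 𝕋))
            (deriv (lift φ) (n - y) * q (y : 𝕋)) n := by
          refine HasDerivAt.mul_const ?_ _
          simp only [h1]; exact hd
        show HasDerivAt (fun m : ℝ => φ ((m : 𝕋) - (y : 𝕋)) * q (y : 𝕋))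
          (φd ((n : 𝕋) - (y : 𝕋)) * q (y : 𝕋)) n
        rw [h1 n, hφd]
        exact this)
  exact key.2

lemma deriv_phiStar {φ φd : 𝕋 → ℝ} (hφ : ContDiff ℝ 2 (lift φ))
    (hφd : ∀ s : ℝ, φd ((s : ℝ) : 𝕋) = deriv (lift φ) s)
    {q : 𝕋 → ℝ} (hq : MemLp q 2 volume) (s : ℝ) :
    deriv (lift (PhiStar φ q)) s = ∫ x, φd (((s : ℝ) : 𝕋) - x) * q x :=
  (hasDerivAt_phiStar hφ hφd hq s).deriv

end Aux

lemma constr_iff {φ φd : 𝕋 → ℝ} (hφ : ContDiff ℝ 2 (lift φ))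
    (hφd : ∀ s : ℝ, φd ((s : ℝ) : 𝕋) = deriv (lift φ) s)
    (a₀ : Fin N → ℝ) (x₀ : Fin N → ℝ) {q : 𝕋 → ℝ} (hq : MemLp q 2 volume) :
    VConstr φ a₀ x₀ q ↔ ∀ j, (∫ x, gker φ φd x₀ j x * q x) =
      Sum.elim (fun i => Real.sign (a₀ i)) (fun _ => 0) j := by
  constructor
  · intro h j
    cases j with
    | inl i => simpa [gker, PhiStar] using (h i).1
    | inr i =>
      have := (h i).2
      rw [deriv_phiStar hφ hφd hq] at this
      simpa [gker] using this
  · intro h i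
    refine ⟨?_, ?_⟩
    · simpa [gker, PhiStar] using h (Sum.inl i)
    · rw [deriv_phiStar hφ hφd hq]
      simpa [gker] using h (Sum.inr i)

/-- **Closed form of the vanishing derivative pre-certificate.** If `Γ_{x₀}` has full rank
(`Γ_{x₀}*Γ_{x₀}` invertible) and the vanishing-derivative problem is feasible, then the
pre-certificate `η_V` is uniquely defined and given by
`η_V = Φ* Γ_{x₀} (Γ_{x₀}*Γ_{x₀})⁻¹ (sign(a₀), 0)ᵀ`. -/
theorem vanishing_derivative_closed_form (φ φd : 𝕋 → ℝ)
    (hφ : ContDiff ℝ 2 (lift φ)) (hφd : ∀ s : ℝ, φd ((s : ℝ) : 𝕋) = deriv (lift φ) s)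
    (a₀ : Fin N → ℝ) (x₀ : Fin N → ℝ) (ha₀ : ∀ i, a₀ i ≠ 0)
    (hx₀ : Function.Injective (fun i => ((x₀ i : ℝ) : 𝕋)))
    (hM : IsUnit (gram φ φd x₀))
    (hfeas : ∃ p : 𝕋 → ℝ, MemLp p 2 volume ∧ VConstr φ a₀ x₀ p) :
    (∃ pV : 𝕋 → ℝ, MemLp pV 2 volume ∧ VConstr φ a₀ x₀ pV ∧
        ∀ q : 𝕋 → ℝ, MemLp q 2 volume → VConstr φ a₀ x₀ q → L2norm pV ≤ L2norm q) ∧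
      ∀ pV : 𝕋 → ℝ,
        (MemLp pV 2 volume ∧ VConstr φ a₀ x₀ pV ∧
          ∀ q : 𝕋 → ℝ, MemLp q 2 volume → VConstr φ a₀ x₀ q → L2norm pV ≤ L2norm q) →
        ∀ t : 𝕋, PhiStar φ pV t =
          PhiStar φ
            (fun x => ∑ j, (Matrix.mulVec (gram φ φd x₀)⁻¹
              (Sum.elim (fun i => Real.sign (a₀ i)) (fun _ => 0))) j * gker φ φd x₀ j x)
            t := by
  classical
  set b : Fin N ⊕ Fin N → ℝ := Sum.elim (fun i => Real.sign (a₀ i)) (fun _ => 0) with hbdef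
  set c : Fin N ⊕ Fin N → ℝ := Matrix.mulVec (gram φ φd x₀)⁻¹ b with hcdef
  set P : 𝕋 → ℝ := fun x => ∑ j, c j * gker φ φd x₀ j x with hPdef
  have hφc : Continuous φ := continuous_of_lift hφ.continuous
  have hφdc : Continuous φd := continuous_phid hφ hφd
  have hgc : ∀ j, Continuous (gker φ φd x₀ j) := continuous_gker hφc hφdc x₀
  have hPc : Continuous P := by
    apply continuous_finset_sum
    exact fun j _ => continuous_const.mul (hgc j)
  have hPm : MemLp P 2 volume := memL2_of_cont hPc
  -- integrability of kernel products
  have hint_gq : ∀ (q : 𝕋 → ℝ), MemLp q 2 volume → ∀ j,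
      Integrable (fun x => gker φ φd x₀ j x * q x) volume := fun q hq j =>
    (integrable_of_memL2 hq).bdd_mul (hgc j).aestronglyMeasurable
      (Filter.Eventually.of_forall (exists_bound_of_cont (hgc j)).choose_spec)
  have hint_Pq : ∀ (q : 𝕋 → ℝ), MemLp q 2 volume →
      Integrable (fun x => P x * q x) volume := fun q hq =>
    (integrable_of_memL2 hq).bdd_mul hPc.aestronglyMeasurable (Filter.Eventually.of_forall (exists_bound_of_cont hPc).choose_spec)
  -- expansion of inner products against P
  have hPdot : ∀ (q : 𝕋 → ℝ), MemLp q 2 volume →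
      (∫ x, P x * q x) = ∑ j, c j * ∫ x, gker φ φd x₀ j x * q x := by
    intro q hq
    have h1 : (fun x => P x * q x)
        = fun x => ∑ j, c j * (gker φ φd x₀ j x * q x) := by
      funext x
      rw [hPdef, Finset.sum_mul]
      exact Finset.sum_congr rfl fun j _ => by ring
    rw [h1, integral_finset_sum _ (fun j _ => (hint_gq q hq j).const_mul (c j))]
    exact Finset.sum_congr rfl fun j _ => integral_const_mul _ _
  -- P satisfies the constraints
  have hgP : ∀ k, (∫ x, gker φ φd x₀ k x * P x) = b k := by
    intro k
    have h1 : (∫ x, gker φ φd x₀ k x * P x) = ∑ j, gram φ φd x₀ k j * c j := by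
      have h2 : (fun x => gker φ φd x₀ k x * P x)
          = fun x => ∑ j, c j * (gker φ φd x₀ k x * gker φ φd x₀ j x) := by
        funext x
        rw [hPdef, Finset.mul_sum]
        exact Finset.sum_congr rfl fun j _ => by ring
      rw [h2, integral_finset_sum _ (fun j _ => ?_)]
      · refine Finset.sum_congr rfl fun j _ => ?_
        simp only [gram]
        rw [integral_const_mul]
        ring
      · exact (integrable_of_cont ((hgc k).mul (hgc j))).const_mul _
    rw [h1]
    have : ∑ j, gram φ φd x₀ k j * c j = Matrix.mulVec (gram φ φd x₀) c k := rfl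
    rw [this, hcdef, Matrix.mulVec_mulVec,
      Matrix.mul_nonsing_inv _ ((Matrix.isUnit_iff_isUnit_det _).mp hM),
      Matrix.one_mulVec]
  have hPfeas : VConstr φ a₀ x₀ P :=
    (constr_iff hφ hφd a₀ x₀ hPm).mpr fun j => hgP j
  -- orthogonality: for any feasible q, ⟨P, q⟩ = ⟨P, P⟩
  have hortho : ∀ (q : 𝕋 → ℝ), MemLp q 2 volume → VConstr φ a₀ x₀ q →
      (∫ x, P x * q x) = ∫ x, P x * P x := by
    intro q hq hqc
    rw [hPdot q hq, hPdot P hPm]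
    refine Finset.sum_congr rfl fun j _ => ?_
    rw [(constr_iff hφ hφd a₀ x₀ hq).mp hqc j, hgP j]
  -- pythagoras
  have hsplit : ∀ (q : 𝕋 → ℝ), MemLp q 2 volume → VConstr φ a₀ x₀ q →
      (∫ x, (q x - P x) ^ 2) = (∫ x, (q x) ^ 2) - ∫ x, (P x) ^ 2 := by
    intro q hq hqc
    have e : (fun x => (q x - P x) ^ 2)
        = fun x => ((q x) ^ 2 - 2 * (P x * q x)) + (P x) ^ 2 := by
      funext x; ring
    have hi1 : Integrable (fun x => (q x) ^ 2 - 2 * (P x * q x)) volume :=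
      hq.integrable_sq.sub ((hint_Pq q hq).const_mul 2)
    have hi2 : Integrable (fun x => 2 * (P x * q x)) volume := (hint_Pq q hq).const_mul 2
    rw [e, integral_add hi1 hPm.integrable_sq, integral_sub hq.integrable_sq hi2,
      integral_const_mul, hortho q hq hqc]
    have : (∫ x, P x * P x) = ∫ x, (P x) ^ 2 := by
      congr 1; funext x; ring
    rw [this]; ring
  have hmin : ∀ q : 𝕋 → ℝ, MemLp q 2 volume → VConstr φ a₀ x₀ q →
      L2norm P ≤ L2norm q := by
    intro q hq hqc
    refine Real.sqrt_le_sqrt ?_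
    have h0 : 0 ≤ ∫ x, (q x - P x) ^ 2 := integral_nonneg fun x => sq_nonneg _
    have := hsplit q hq hqc
    linarith
  refine ⟨⟨P, hPm, hPfeas, hmin⟩, ?_⟩
  rintro pV ⟨hpVm, hpVc, hpVmin⟩ t
  have h1 : L2norm pV ≤ L2norm P := hpVmin P hPm hPfeas
  have hsq : ∀ (f : 𝕋 → ℝ), 0 ≤ ∫ x, (f x) ^ 2 := fun f => integral_nonneg fun x => sq_nonneg _
  have hle : (∫ x, (pV x) ^ 2) ≤ ∫ x, (P x) ^ 2 := by
    have h2 := Real.sq_sqrt (hsq pV)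
    have h3 := Real.sq_sqrt (hsq P)
    have h4 : Real.sqrt (∫ x, (pV x) ^ 2) ^ 2 ≤ Real.sqrt (∫ x, (P x) ^ 2) ^ 2 :=
      pow_le_pow_left₀ (Real.sqrt_nonneg _) h1 2
    rw [h2, h3] at h4
    exact h4
  have hz : (∫ x, (pV x - P x) ^ 2) = 0 := by
    have := hsplit pV hpVm hpVc
    have h0 : 0 ≤ ∫ x, (pV x - P x) ^ 2 := integral_nonneg fun x => sq_nonneg _
    linarith
  have hae : pV =ᵐ[volume] P := by
    have h0 := (integral_eq_zero_iff_of_nonneg (fun x => sq_nonneg (pV x - P x))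
      ((hpVm.sub hPm).integrable_sq)).mp hz
    filter_upwards [h0] with x hx
    have : (pV x - P x) ^ 2 = 0 := hx
    have := (pow_eq_zero_iff two_ne_zero).mp this
    linarith [sub_eq_zero.mp this]
  show (∫ x, φ (t - x) * pV x) = ∫ x, φ (t - x) * P x
  refine integral_congr_ae ?_
  filter_upwards [hae] with x hx
  rw [hx]
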